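/- If c ∈ C_n(X;ℝ) is a singular cycle (∂c = 0), then its symmetrisation is normalised: ∂_j(sym_n(c)) = 0 for every j ∈ {0,...,n}. -/

import Mathlib

open Finset

noncomputable section SingularChains

/-- The affine map `Δ^k → Δ^n` extending the vertex map `π`. -/
def affMap {k n : ℕ} (π : Fin (k + 1) → Fin (n + 1)) :
    C(stdSimplex ℝ (Fin (k + 1)), stdSimplex ℝ (Fin (n + 1))) where
  toFun x := ⟨fun i => ∑ l ∈ Finset.univ.filter (fun l => π l = i), (x : Fin (k + 1) → ℝ) l, by
    constructor
    · intro i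
      exact Finset.sum_nonneg fun l _ => x.2.1 l
    · rw [← x.2.2]
      exact Finset.sum_fiberwise _ _ _⟩
  continuous_toFun := by
    apply Continuous.subtype_mk
    exact continuous_pi fun i =>
      continuous_finset_sum _ fun l _ => (continuous_apply l).comp continuous_subtype_val

variable {X : Type} [TopologicalSpace X]

/-- Singular `n`-simplices in `X`. -/
abbrev Sing (n : ℕ) (X : Type) [TopologicalSpace X] := C(stdSimplex ℝ (Fin (n + 1)), X)

/-- Singular `n`-chains with real coefficients. -/
abbrev Chain (n : ℕ) (X : Type) [TopologicalSpace X] := Sing n X →₀ ℝ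

/-- The `j`-th face map `∂ⱼ : C_{n+1}(X;ℝ) → C_n(X;ℝ)`. -/
def face {n : ℕ} (j : Fin (n + 2)) : Chain (n + 1) X →ₗ[ℝ] Chain n X :=
  Finsupp.lmapDomain ℝ ℝ fun σ => σ.comp (affMap (Fin.succAbove j))

/-- The singular boundary operator `∂ = Σⱼ (-1)ʲ ∂ⱼ`. -/
def bdry (n : ℕ) : Chain (n + 1) X →ₗ[ℝ] Chain n X :=
  ∑ j : Fin (n + 2), ((-1 : ℝ) ^ (j : ℕ)) • face j

/-- The symmetrisation of a singular simplex. -/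
def symSimplex {n : ℕ} (σ : Sing n X) : Chain n X :=
  (((n + 1).factorial : ℝ))⁻¹ •
    ∑ π : Equiv.Perm (Fin (n + 1)),
      ((Equiv.Perm.sign π : ℤ) : ℝ) • Finsupp.single (σ.comp (affMap π)) (1 : ℝ)

/-- The symmetrisation map `sym_n : C_n(X;ℝ) → C_n(X;ℝ)`. -/
def symCh (n : ℕ) : Chain n X →ₗ[ℝ] Chain n X :=
  Finsupp.lsum ℝ fun σ => LinearMap.toSpanSingleton ℝ _ (symSimplex σ)

/-- The ℓ¹-norm of a singular chain. -/
def l1 {n : ℕ} (c : Chain n X) : ℝ := ∑ σ ∈ c.support, |c σ|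

/-- Cycles. -/
def cyc (X : Type) [TopologicalSpace X] : (n : ℕ) → Submodule ℝ (Chain n X)
  | 0 => ⊤
  | n + 1 => LinearMap.ker (bdry n)

/-- Boundaries. -/
def bdries (X : Type) [TopologicalSpace X] (n : ℕ) : Submodule ℝ (Chain n X) :=
  LinearMap.range (bdry n)

/-- A chain is normalised if all but the last face map vanish on it. -/
def IsNormalised : {n : ℕ} → Chain n X → Prop
  | 0, _ => True
  | n + 1, c => ∀ j : Fin (n + 2), j ≠ Fin.last (n + 1) → face j c = 0

/-- The cyclic permutation `τⱼ = (j j-1 ⋯ 1 0)`. -/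
def tau (n : ℕ) (j : Fin (n + 1)) : Equiv.Perm (Fin (n + 1)) := (Fin.cycleRange j)⁻¹

end SingularChains

noncomputable section Aux

variable {X : Type} [TopologicalSpace X]

lemma affMap_comp {k m n : ℕ} (f : Fin (m + 1) → Fin (n + 1)) (g : Fin (k + 1) → Fin (m + 1)) :
    (affMap f).comp (affMap g) = affMap (f ∘ g) := by
  apply ContinuousMap.ext; intro x
  apply Subtype.ext; funext i
  show (∑ l ∈ Finset.univ.filter (fun l => f l = i),
      ∑ s ∈ Finset.univ.filter (fun s => g s = l), (x : Fin (k+1) → ℝ) s)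
    = ∑ s ∈ Finset.univ.filter (fun s => f (g s) = i), (x : Fin (k+1) → ℝ) s
  rw [Finset.sum_fiberwise_eq_sum_filter Finset.univ (Finset.univ.filter (fun l => f l = i)) g]
  refine Finset.sum_congr ?_ fun _ _ => rfl
  ext s
  simp [Function.comp]

lemma sing_comp_affMap {k m n : ℕ} (σ : Sing n X) (f : Fin (m + 1) → Fin (n + 1))
    (g : Fin (k + 1) → Fin (m + 1)) :
    (σ.comp (affMap f)).comp (affMap g) = σ.comp (affMap (f ∘ g)) := by
  rw [ContinuousMap.comp_assoc, affMap_comp]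

lemma face_single {n : ℕ} (j : Fin (n + 2)) (σ : Sing (n + 1) X) (r : ℝ) :
    face j (Finsupp.single σ r) = Finsupp.single (σ.comp (affMap (Fin.succAbove j))) r := by
  simp [face, Finsupp.lmapDomain_apply, Finsupp.mapDomain_single]

lemma symCh_single {n : ℕ} (σ : Sing n X) (r : ℝ) :
    symCh n (Finsupp.single σ r) = r • symSimplex σ := by
  simp [symCh, LinearMap.toSpanSingleton_apply]

lemma succAbove_eq {n : ℕ} (i : Fin (n + 2)) (m : Fin (n + 1)) :
    i.succAbove m = (Fin.cycleRange i)⁻¹ (m.succ) := by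
  rw [← Fin.cycleRange_succAbove i m, Equiv.Perm.coe_inv, Equiv.symm_apply_apply]

/-- The reindexing bijection. -/
def phi (n : ℕ) (j : Fin (n + 2)) (p : Fin (n + 2) × Equiv.Perm (Fin (n + 1))) :
    Equiv.Perm (Fin (n + 2)) :=
  (Fin.cycleRange p.1)⁻¹ * Equiv.Perm.decomposeFin.symm (0, p.2) * Fin.cycleRange j

lemma phi_succAbove {n : ℕ} (j i : Fin (n + 2)) (ρ : Equiv.Perm (Fin (n + 1)))
    (l : Fin (n + 1)) : phi n j (i, ρ) (j.succAbove l) = i.succAbove (ρ l) := by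
  simp only [phi, Equiv.Perm.mul_apply, Fin.cycleRange_succAbove,
    Equiv.Perm.decomposeFin_symm_apply_succ, Equiv.swap_self, Equiv.refl_apply,
    succAbove_eq, Equiv.Perm.coe_inv, Equiv.apply_symm_apply]

lemma phi_comp {n : ℕ} (j i : Fin (n + 2)) (ρ : Equiv.Perm (Fin (n + 1))) :
    (phi n j (i, ρ) : Fin (n + 2) → Fin (n + 2)) ∘ j.succAbove
      = i.succAbove ∘ (ρ : Fin (n + 1) → Fin (n + 1)) :=
  funext fun l => phi_succAbove j i ρ l

lemma phi_apply_j {n : ℕ} (j i : Fin (n + 2)) (ρ : Equiv.Perm (Fin (n + 1))) :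
    phi n j (i, ρ) j = i := by
  simp only [phi, Equiv.Perm.mul_apply, Fin.cycleRange_self,
    Equiv.Perm.decomposeFin_symm_apply_zero]
  rw [← Fin.cycleRange_self i, Equiv.Perm.coe_inv, Equiv.symm_apply_apply]

lemma phi_sign {n : ℕ} (j i : Fin (n + 2)) (ρ : Equiv.Perm (Fin (n + 1))) :
    ((Equiv.Perm.sign (phi n j (i, ρ)) : ℤ) : ℝ)
      = (-1) ^ (i : ℕ) * (-1) ^ (j : ℕ) * ((Equiv.Perm.sign ρ : ℤ) : ℝ) := by
  simp only [phi, map_mul, Equiv.Perm.sign_inv, Fin.sign_cycleRange,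
    Equiv.Perm.decomposeFin.symm_sign, if_pos rfl, one_mul]
  push_cast
  ring

lemma phi_bijective {n : ℕ} (j : Fin (n + 2)) : Function.Bijective (phi n j) := by
  rw [Fintype.bijective_iff_injective_and_card]
  refine ⟨?_, by simp [Fintype.card_prod, Fintype.card_perm, Fintype.card_fin, Nat.factorial_succ]⟩
  rintro ⟨i, ρ⟩ ⟨i', ρ'⟩ h
  have hi : i = i' := by
    have h1 := congrArg (fun π : Equiv.Perm (Fin (n + 2)) => π j) h
    simpa only [phi_apply_j] using h1
  subst hi
  have h2 : Equiv.Perm.decomposeFin.symm (0, ρ) = Equiv.Perm.decomposeFin.symm (0, ρ') := by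
    simp only [phi] at h
    exact mul_left_cancel (mul_right_cancel h)
  have h4 : ((0 : Fin (n + 2)), ρ) = (0, ρ') := Equiv.Perm.decomposeFin.symm.injective h2
  rw [(Prod.mk.injEq _ _ _ _).mp h4 |>.2]

end Aux

noncomputable section Aux2
variable {X : Type} [TopologicalSpace X]

lemma key_simplex {n : ℕ} (σ : Sing (n + 1) X) (j : Fin (n + 2)) :
    face j (symSimplex σ)
      = ((-1 : ℝ) ^ (j : ℕ) * ((n + 2 : ℕ) : ℝ)⁻¹) •
        ∑ i : Fin (n + 2), ((-1 : ℝ) ^ (i : ℕ)) •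
          symSimplex (σ.comp (affMap (Fin.succAbove i))) := by
  have hfac : ((n + 1 + 1).factorial : ℝ) = ((n + 2 : ℕ) : ℝ) * ((n + 1).factorial : ℝ) := by
    rw [Nat.factorial_succ]; push_cast; ring
  rw [symSimplex, map_smul, map_sum]
  simp only [map_smul, face_single, sing_comp_affMap]
  rw [← Fintype.sum_bijective (phi n j) (phi_bijective j)
      (fun p => (((Equiv.Perm.sign (phi n j p) : ℤ) : ℝ)) •
        Finsupp.single (σ.comp (affMap ((phi n j p : Fin (n + 2) → Fin (n + 2)) ∘
          Fin.succAbove j))) (1 : ℝ)) _ (fun _ => rfl)]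
  rw [Fintype.sum_prod_type]
  simp only [phi_comp, phi_sign]
  simp only [symSimplex, sing_comp_affMap, Finset.smul_sum, smul_smul]
  refine Finset.sum_congr rfl fun i _ => ?_
  refine Finset.sum_congr rfl fun ρ _ => ?_
  congr 1
  rw [hfac]
  have h2 : ((n + 2 : ℕ) : ℝ) ≠ 0 := by positivity
  have h3 : ((n + 1).factorial : ℝ) ≠ 0 := by positivity
  field_simp

lemma key_chain {n : ℕ} (c : Chain (n + 1) X) (j : Fin (n + 2)) :
    face j (symCh (n + 1) c)
      = ((-1 : ℝ) ^ (j : ℕ) * ((n + 2 : ℕ) : ℝ)⁻¹) • symCh n (bdry n c) := by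
  induction c using Finsupp.induction_linear with
  | zero => simp
  | add f g hf hg => simp only [map_add, hf, hg, smul_add]
  | single σ r =>
    rw [symCh_single, map_smul, key_simplex]
    have hb : bdry n (Finsupp.single σ r)
        = ∑ i : Fin (n + 2), ((-1 : ℝ) ^ (i : ℕ)) •
            Finsupp.single (σ.comp (affMap (Fin.succAbove i))) r := by
      simp only [bdry, LinearMap.sum_apply, LinearMap.smul_apply, face_single]
    rw [hb, map_sum]
    simp only [map_smul, symCh_single, Finset.smul_sum, smul_smul]
    refine Finset.sum_congr rfl fun i _ => ?_
    congr 1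
    ring

end Aux2

/-- The symmetrisation of a cycle is normalised: all face maps vanish on it. -/
theorem face_symm_eq_zero (X : Type) [TopologicalSpace X] (n : ℕ) (c : Chain (n + 1) X)
    (hc : bdry n c = 0) (j : Fin (n + 2)) :
    face j (symCh (n + 1) c) = 0 := by
  rw [key_chain, hc, map_zero, smul_zero]
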